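/- For every integer k, the ideal ⟨Θ - 2, 7⟩ of Z[Θ] is not invertible, where Θ is a root of f_{49k+27}(x) = x^3 - (49k+27)x^2 + (49k+26)x - 1. Consequently, Z[Θ] is not a Dedekind domain. -/

import Mathlib

set_option synthInstance.maxHeartbeats 1000000
set_option maxHeartbeats 1000000

/-- The subring `ℤ[Θ]` of `ℂ` generated by `Θ`. -/
abbrev adjoinTheta (Θ : ℂ) : Subalgebra ℤ ℂ := Algebra.adjoin ℤ {Θ}

/-- `Θ` as an element of `ℤ[Θ]`. -/
noncomputable abbrev thetaElt (Θ : ℂ) : adjoinTheta Θ := ⟨Θ, Algebra.self_mem_adjoin_singleton ℤ Θ⟩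

section AuxLemmas
open Polynomial


noncomputable def fpoly (k : ℤ) : ℤ[X] :=
  X ^ 3 - C (49 * k + 27) * X ^ 2 + C (49 * k + 26) * X - C 1

lemma fpoly_split (k : ℤ) : fpoly k
    = (X - C 2) ^ 3 + C 7 * (C (-(7 * k + 3)) * X ^ 2 + C (7 * k + 2) * X + 1) := by
  simp only [fpoly, map_add, map_mul, map_neg, map_one, map_ofNat]
  ring

lemma aeval_fpoly (k : ℤ) {A : Type*} [CommRing A] (x : A) :
    aeval x (fpoly k) = x ^ 3 - (49 * k + 27 : ℤ) * x ^ 2 + (49 * k + 26 : ℤ) * x - 1 := by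
  simp only [fpoly, map_sub, map_add, map_mul, map_pow, aeval_X, aeval_C, map_one,
    algebraMap_int_eq, eq_intCast, map_ofNat, map_intCast]
  push_cast
  ring

lemma fpoly_map_zmod7 (k : ℤ) :
    (fpoly k).map (Int.castRingHom (ZMod 7)) = (X - C 2) ^ 3 := by
  rw [fpoly_split]
  simp only [Polynomial.map_add, Polynomial.map_mul, Polynomial.map_pow, Polynomial.map_sub,
    Polynomial.map_one, map_C, Polynomial.map_X, Polynomial.map_ofNat, Polynomial.map_intCast,
    eq_intCast, Int.cast_ofNat]
  push_cast
  rw [show (7 : (ZMod 7)[X]) = 0 by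
        rw [← map_ofNat (C : ZMod 7 →+* (ZMod 7)[X]) 7, show (7 : ZMod 7) = 0 by decide, map_zero],
      map_ofNat (C : ZMod 7 →+* (ZMod 7)[X]) 2]
  ring

lemma fpoly_monic (k : ℤ) : (fpoly k).Monic := by unfold fpoly; monicity!

lemma fpoly_natDegree (k : ℤ) : (fpoly k).natDegree = 3 := by unfold fpoly; compute_degree!

lemma fpoly_irr (k : ℤ) : Irreducible ((fpoly k).map (algebraMap ℤ ℚ)) := by
  have hm : ((fpoly k).map (algebraMap ℤ ℚ)).Monic := (fpoly_monic k).map _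
  have hd : ((fpoly k).map (algebraMap ℤ ℚ)).natDegree = 3 := by
    rw [(fpoly_monic k).natDegree_map, fpoly_natDegree]
  rw [hm.irreducible_iff_roots_eq_zero_of_degree_le_three (by omega) (by omega)]
  rw [Multiset.eq_zero_iff_forall_notMem]
  intro q hq
  rw [mem_roots hm.ne_zero, IsRoot.def, eval_map, ← aeval_def] at hq
  have hint : IsIntegral ℤ q := ⟨fpoly k, fpoly_monic k, hq⟩
  obtain ⟨m, rfl⟩ := IsIntegrallyClosed.isIntegral_iff.mp hint
  rw [aeval_algebraMap_apply, aeval_fpoly] at hq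
  have h0' : m ^ 3 - (49 * k + 27) * m ^ 2 + (49 * k + 26) * m - 1 = 0 := by
    have := hq
    rw [algebraMap_int_eq, eq_intCast] at this
    exact_mod_cast this
  have hunit : m = 1 ∨ m = -1 := by
    have : m * (m ^ 2 - (49 * k + 27) * m + (49 * k + 26)) = 1 := by linarith [h0']
    exact Int.isUnit_iff.mp (IsUnit.of_mul_eq_one _ this)
  rcases hunit with rfl | rfl <;> norm_num at h0' <;> omega

lemma fpoly_dvd (k : ℤ) (Θ : ℂ) (hΘ : aeval Θ (fpoly k) = 0) {s : ℤ[X]}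
    (hs : aeval Θ s = 0) : fpoly k ∣ s := by
  have h1 : minpoly ℚ Θ = (fpoly k).map (algebraMap ℤ ℚ) :=
    (minpoly.eq_of_irreducible_of_monic (fpoly_irr k)
      (by rwa [aeval_map_algebraMap]) ((fpoly_monic k).map _)).symm
  have h2 : minpoly ℚ Θ ∣ s.map (algebraMap ℤ ℚ) :=
    minpoly.dvd ℚ Θ (by rwa [aeval_map_algebraMap])
  rw [h1] at h2
  exact (map_dvd_map (algebraMap ℤ ℚ) (algebraMap ℤ ℚ).injective_int (fpoly_monic k)).mp h2

lemma sevenPoly_eq_zero : (7 : (ZMod 7)[X]) = 0 := by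
  have h70 : (7 : ZMod 7) = 0 := by decide
  rw [← map_ofNat (C : ZMod 7 →+* (ZMod 7)[X]) 7, h70, map_zero]


lemma key_not_exists (k : ℤ) (Θ : ℂ) (hΘ : aeval Θ (fpoly k) = 0) (r : adjoinTheta Θ) :
    (7 : ℂ) * (r : ℂ) ≠ (Θ - 2) ^ 2 := by
  haveI : Fact (Nat.Prime 7) := ⟨by norm_num⟩
  intro hr
  obtain ⟨p, hp⟩ : ∃ p : ℤ[X], aeval Θ p = (r : ℂ) := by
    have h2 : (r : ℂ) ∈ Algebra.adjoin ℤ ({Θ} : Set ℂ) := r.2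
    rw [Algebra.adjoin_singleton_eq_range_aeval] at h2
    exact h2
  set s : ℤ[X] := C 7 * p - (X - C 2) ^ 2 with hs_def
  have hs : aeval Θ s = 0 := by
    simp only [hs_def, map_sub, map_add, map_mul, map_pow, aeval_X, aeval_C, map_ofNat,
      algebraMap_int_eq, eq_intCast, Int.cast_ofNat]
    rw [hp]
    push_cast
    linear_combination hr
  have hdvd := fpoly_dvd k Θ hΘ hs
  have h7 : (fpoly k).map (Int.castRingHom (ZMod 7)) ∣ s.map (Int.castRingHom (ZMod 7)) :=
    Polynomial.map_dvd _ hdvd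
  rw [fpoly_map_zmod7] at h7
  have hs7 : s.map (Int.castRingHom (ZMod 7)) = - (X - C 2) ^ 2 := by
    simp only [hs_def, Polynomial.map_sub, Polynomial.map_mul, Polynomial.map_pow, map_C,
      Polynomial.map_X, Polynomial.map_ofNat, eq_intCast, Int.cast_ofNat]
    push_cast
    rw [sevenPoly_eq_zero, map_ofNat (C : ZMod 7 →+* (ZMod 7)[X]) 2]
    ring
  rw [hs7] at h7
  obtain ⟨q, hq⟩ := h7
  have hcancel : (-1 : (ZMod 7)[X]) = (X - C 2) * q := by
    have hne : ((X - C 2 : (ZMod 7)[X])) ^ 2 ≠ 0 := pow_ne_zero _ (X_sub_C_ne_zero 2)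
    apply mul_left_cancel₀ hne
    linear_combination hq
  simpa using congrArg (Polynomial.eval 2) hcancel

lemma dedekind_exists_mul_span (A : Type*) [CommRing A] [IsDomain A] [IsDedekindDomain A]
    (I : Ideal A) (hI : I ≠ ⊥) :
    ∃ (J : Ideal A) (α : A), α ≠ 0 ∧ I * J = Ideal.span {α} := by
  letI K := FractionRing A
  have hne : (I : FractionalIdeal (nonZeroDivisors A) K) ≠ 0 :=
    FractionalIdeal.coeIdeal_ne_zero.mpr hI
  have hinv : (I : FractionalIdeal (nonZeroDivisors A) K)
      * (I : FractionalIdeal (nonZeroDivisors A) K)⁻¹ = 1 :=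
    mul_inv_cancel₀ hne
  obtain ⟨a, J, ha, hJ⟩ := FractionalIdeal.exists_eq_spanSingleton_mul
      ((I : FractionalIdeal (nonZeroDivisors A) K)⁻¹)
  have ha' : algebraMap A K a ≠ 0 :=
    fun h => ha ((IsFractionRing.injective A K) (by rw [h, map_zero]))
  have hJ' : (J : FractionalIdeal (nonZeroDivisors A) K)
      = FractionalIdeal.spanSingleton (nonZeroDivisors A) (algebraMap A K a)
        * (I : FractionalIdeal (nonZeroDivisors A) K)⁻¹ := by
    rw [hJ, ← mul_assoc, FractionalIdeal.spanSingleton_mul_spanSingleton,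
      mul_inv_cancel₀ ha', FractionalIdeal.spanSingleton_one, one_mul]
  refine ⟨J, a, ha, ?_⟩
  apply FractionalIdeal.coeIdeal_injective (K := K)
  show ((I * J : Ideal A) : FractionalIdeal (nonZeroDivisors A) K)
      = ((Ideal.span {a} : Ideal A) : FractionalIdeal (nonZeroDivisors A) K)
  rw [FractionalIdeal.coeIdeal_mul, hJ', mul_comm
      (FractionalIdeal.spanSingleton (nonZeroDivisors A) (algebraMap A K a)),
    ← mul_assoc, hinv, one_mul, FractionalIdeal.coeIdeal_span_singleton]

end AuxLemmas

open Polynomial in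
/-- For every integer `k` and every root `Θ` of `f_{49k+27}`, the ideal `⟨Θ - 2, 7⟩` of
`ℤ[Θ]` is not invertible (no ideal multiplies it into a nonzero principal ideal);
consequently `ℤ[Θ]` is not a Dedekind domain. -/
theorem ideal_not_invertible_49k27 (k : ℤ) (Θ : ℂ)
    (hΘ : Θ ^ 3 - ((49 * k + 27 : ℤ) : ℂ) * Θ ^ 2 + ((49 * k + 26 : ℤ) : ℂ) * Θ - 1 = 0) :
    (¬ ∃ (J : Ideal (adjoinTheta Θ)) (α : adjoinTheta Θ), α ≠ 0 ∧
        Ideal.span {thetaElt Θ - 2, (7 : adjoinTheta Θ)} * J = Ideal.span {α}) ∧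
    ¬ IsDedekindDomain (adjoinTheta Θ) := by
  have haev : aeval Θ (fpoly k) = 0 := by
    rw [aeval_fpoly]; exact hΘ
  have hΘ' : Θ ^ 3 - (49 * (k : ℂ) + 27) * Θ ^ 2 + (49 * (k : ℂ) + 26) * Θ - 1 = 0 := by
    push_cast at hΘ; linear_combination hΘ
  set R := adjoinTheta Θ with hRdef
  have cInt : ∀ n : ℤ, ((n : R) : ℂ) = (n : ℂ) := fun n => rfl
  have c7 : ((7 : R) : ℂ) = 7 := rfl
  set τ : R := thetaElt Θ - 2 with hτdef
  have hτc : (τ : ℂ) = Θ - 2 := rfl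
  set I : Ideal R := Ideal.span {τ, (7 : R)} with hIdef
  have hτI : τ ∈ I := Ideal.subset_span (Set.mem_insert _ _)
  have h7I : (7 : R) ∈ I := Ideal.subset_span (Set.mem_insert_of_mem _ rfl)
  have hτ2I : τ ^ 2 ∈ I := by rw [sq]; exact Ideal.mul_mem_left _ _ hτI
  -- the element w with 7 * w = (Θ-2)^3
  set w : R := ((7 * k + 3 : ℤ) : R) * τ ^ 2 + ((21 * k + 10 : ℤ) : R) * τ
      + ((2 * k + 1 : ℤ) : R) * 7 with hwdef
  have hwI : w ∈ I :=
    add_mem (add_mem (Ideal.mul_mem_left _ _ hτ2I) (Ideal.mul_mem_left _ _ hτI))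
      (Ideal.mul_mem_left _ _ h7I)
  have hwc : (7 : ℂ) * (w : ℂ) = (Θ - 2) ^ 3 := by
    have hwc' : (w : ℂ) = ((7 * k + 3 : ℤ) : ℂ) * (Θ - 2) ^ 2
        + ((21 * k + 10 : ℤ) : ℂ) * (Θ - 2) + ((2 * k + 1 : ℤ) : ℂ) * 7 := rfl
    rw [hwc']
    push_cast
    linear_combination -hΘ'
  -- step 1: multiplication by (Θ-2)^2/7 preserves I
  have step1 : ∀ i ∈ I, ∃ i' ∈ I, (7 : ℂ) * (i' : ℂ) = (Θ - 2) ^ 2 * (i : ℂ) := by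
    intro i hi
    rw [hIdef, Ideal.mem_span_pair] at hi
    obtain ⟨u, v, huv⟩ := hi
    refine ⟨u * w + v * τ ^ 2, add_mem (Ideal.mul_mem_left _ _ hwI)
      (Ideal.mul_mem_left _ _ hτ2I), ?_⟩
    rw [← huv]
    push_cast [hτc, c7]
    linear_combination (u : ℂ) * hwc
  -- the main non-invertibility statement
  have main : ¬ ∃ (J : Ideal R) (α : R), α ≠ 0 ∧ I * J = Ideal.span {α} := by
    rintro ⟨J, α, hα, hIJ⟩
    have step2 : ∀ x ∈ I * J, ∃ y ∈ I * J, (7 : ℂ) * (y : ℂ) = (Θ - 2) ^ 2 * (x : ℂ) := by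
      intro x hx
      refine Submodule.mul_induction_on hx ?_ ?_
      · intro i hi j hj
        obtain ⟨i', hi', hieq⟩ := step1 i hi
        refine ⟨i' * j, Ideal.mul_mem_mul hi' hj, ?_⟩
        push_cast
        linear_combination (j : ℂ) * hieq
      · rintro x y ⟨x', hx', hxeq⟩ ⟨y', hy', hyeq⟩
        refine ⟨x' + y', add_mem hx' hy', ?_⟩
        push_cast
        linear_combination hxeq + hyeq
    have hαmem : α ∈ I * J := by rw [hIJ]; exact Ideal.mem_span_singleton_self α
    obtain ⟨y, hy, hyeq⟩ := step2 α hαmem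
    rw [hIJ, Ideal.mem_span_singleton'] at hy
    obtain ⟨r, hr⟩ := hy
    have hαc : (α : ℂ) ≠ 0 := fun h => hα (Subtype.coe_injective h)
    have hfin : (7 : ℂ) * (r : ℂ) = (Θ - 2) ^ 2 := by
      apply mul_right_cancel₀ hαc
      rw [← hr] at hyeq
      push_cast at hyeq
      linear_combination hyeq
    exact key_not_exists k Θ haev r hfin
  refine ⟨main, fun hDD => main ?_⟩
  have hI0 : I ≠ ⊥ := by
    intro h
    have h1 : (7 : R) = 0 := by rw [h] at h7I; exact h7I
    have h2 : ((7 : R) : ℂ) = 0 := by rw [h1]; rfl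
    rw [c7] at h2
    norm_num at h2
  exact dedekind_exists_mul_span _ I hI0
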